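/- arXiv:2204.02836 — 5 statements merged into one kernel-verified Lean document; each statement's English description precedes it below -/
import Mathlib

section
/- Let K be a field, f ∈ K[x] monic separable of degree n with distinct roots α_1, …, α_n in a splitting field N. Let F(z, u) = ∏_{σ ∈ S_n}(z − Σ_i α_{σ(i)} u_i) ∈ K[z, u_1, …, u_n], and let F_1 be an irreducible factor of F in K[z, u_1, …, u_n] divisible (over N) by z − Σ_i α_i u_i. Then a permutation τ ∈ S_n lies in the Galois group of f over K (acting on the indexed roots) if and only if z − Σ_i α_{τ(i)} u_i divides F_1 over N. -/
open Polynomial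

set_option maxHeartbeats 1000000
set_option synthInstance.maxHeartbeats 400000

theorem sum_CX_inj {Nn : Type} [CommSemiring Nn] {n : ℕ} (a b : Fin n → Nn)
    (h : (∑ i, MvPolynomial.C (a i) * MvPolynomial.X i : MvPolynomial (Fin n) Nn)
       = ∑ i, MvPolynomial.C (b i) * MvPolynomial.X i) : ∀ j, a j = b j := by
  intro j
  have h2 := congrArg (MvPolynomial.coeff (Finsupp.single j 1)) h
  simpa [MvPolynomial.coeff_sum, MvPolynomial.coeff_C_mul, MvPolynomial.coeff_X',
    Finsupp.single_left_inj (one_ne_zero), Finset.sum_ite_eq'] using h2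

/-- Van der Waerden's resolvent characterization: let `F(z,u) = ∏_{σ∈Sₙ}(z − Σ α_{σ(i)} uᵢ)`,
a polynomial `F₀` over `K[u]`, and `F₁` an irreducible factor of `F₀` over `K[u]` divisible
(over `N`) by `z − Σ αᵢ uᵢ`. Then `τ ∈ Sₙ` lies in the Galois group of `f` over `K` (acting
on the indexed roots) iff `z − Σ α_{τ(i)} uᵢ` divides `F₁` over `N`. -/
theorem stmt5 (K N : Type) [Field K] [Field N] [Algebra K N] (n : ℕ)
    (f : K[X]) (hm : f.Monic) (hsep : f.Separable)
    [IsSplittingField K N f] (α : Fin n → N) (hinj : Function.Injective α)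
    (hroots : f.map (algebraMap K N) = ∏ i, (X - C (α i)))
    (F₀ F₁ : Polynomial (MvPolynomial (Fin n) K))
    (hF₀ : F₀.map (MvPolynomial.map (algebraMap K N)) =
      ∏ σ : Equiv.Perm (Fin n),
        (X - C (∑ i, MvPolynomial.C (α (σ i)) * MvPolynomial.X i)))
    (hF₁ : Irreducible F₁) (hdvd : F₁ ∣ F₀)
    (hid : (X - C (∑ i, MvPolynomial.C (α i) * MvPolynomial.X i)) ∣
      F₁.map (MvPolynomial.map (algebraMap K N))) :
    ∀ τ : Equiv.Perm (Fin n),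
      (∃ ψ : N ≃ₐ[K] N, ∀ i, ψ (α i) = α (τ i)) ↔
        (X - C (∑ i, MvPolynomial.C (α (τ i)) * MvPolynomial.X i)) ∣
          F₁.map (MvPolynomial.map (algebraMap K N)) := by
  intro τ
  constructor
  · rintro ⟨ψ, hψ⟩
    set g : MvPolynomial (Fin n) N →+* MvPolynomial (Fin n) N :=
      MvPolynomial.map (ψ : N →+* N) with hg
    have hgm : g.comp (MvPolynomial.map (algebraMap K N))
        = MvPolynomial.map (algebraMap K N) := by
      apply MvPolynomial.ringHom_ext <;> intro x <;> simp [hg, MvPolynomial.map_C]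
    have key := Polynomial.map_dvd g hid
    rw [Polynomial.map_map, hgm] at key
    have hl : ((X : Polynomial (MvPolynomial (Fin n) N)) -
        C (∑ i, MvPolynomial.C (α i) * MvPolynomial.X i)).map g =
        X - C (∑ i, MvPolynomial.C (α (τ i)) * MvPolynomial.X i) := by
      rw [Polynomial.map_sub, Polynomial.map_X, Polynomial.map_C, hg,
        map_sum (MvPolynomial.map (ψ : N →+* N))]
      simp [hψ]
    rwa [hl] at key
  · intro hτ
    classical
    set R := MvPolynomial (Fin n) K with hR
    set S := MvPolynomial (Fin n) N with hS
    set m : R →+* S := MvPolynomial.map (algebraMap K N) with hm'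
    have hminj : Function.Injective m := MvPolynomial.map_injective _ (algebraMap K N).injective
    letI : Algebra R S := m.toAlgebra
    set FS := FractionRing S with hFS
    set FR := FractionRing R with hFR
    haveI t1 : IsScalarTower R S FS := IsScalarTower.of_algebraMap_eq fun x => rfl
    haveI t2 : IsScalarTower K R FR := IsScalarTower.of_algebraMap_eq fun x => rfl
    haveI t3 : IsScalarTower K R S := IsScalarTower.of_algebraMap_eq fun x =>
      (MvPolynomial.map_C _ x).symm
    haveI t4 : IsScalarTower N S FS := IsScalarTower.of_algebraMap_eq fun x => rfl
    haveI t5 : IsScalarTower K S FS := IsScalarTower.of_algebraMap_eq fun x => rfl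
    have hRFSinj : Function.Injective (algebraMap R FS) := by
      rw [IsScalarTower.algebraMap_eq R S FS]
      exact (IsFractionRing.injective S FS).comp hminj
    haveI : FaithfulSMul R FS := by rw [faithfulSMul_iff_algebraMap_injective]; exact hRFSinj
    letI : Algebra FR FS := FractionRing.liftAlgebra R FS
    haveI t6 : IsScalarTower R FR FS := FractionRing.isScalarTower_liftAlgebra R FS
    haveI t7 : IsScalarTower K FR FS := by
      refine IsScalarTower.of_algebraMap_eq fun x => ?_
      rw [IsScalarTower.algebraMap_apply K R FS, IsScalarTower.algebraMap_apply R FR FS,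
        IsScalarTower.algebraMap_apply K R FR]
    haveI t8 : IsScalarTower K N FS := by
      refine IsScalarTower.of_algebraMap_eq fun x => ?_
      rw [IsScalarTower.algebraMap_apply K S FS, IsScalarTower.algebraMap_apply N S FS]; rfl
    -- the two distinguished elements
    set s₁ : S := ∑ i, MvPolynomial.C (α i) * MvPolynomial.X i with hs₁
    set s₂ : S := ∑ i, MvPolynomial.C (α (τ i)) * MvPolynomial.X i with hs₂
    set θ₁ : FS := algebraMap S FS s₁ with hθ₁
    set θ₂ : FS := algebraMap S FS s₂ with hθ₂
    -- F₀ is monic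
    have hF₀m : F₀.Monic := by
      have h1 : (F₀.map m).Monic := by
        rw [hF₀]; exact monic_prod_of_monic _ _ fun σ _ => monic_X_sub_C _
      exact Polynomial.monic_of_injective hminj h1
    -- F₁ is primitive
    have hF₁prim : F₁.IsPrimitive := fun r hr => hF₀m.isPrimitive r (hr.trans hdvd)
    -- Gauss: F₁ is irreducible over FR
    letI : NormalizationMonoid R := UniqueFactorizationMonoid.normalizationMonoid.toNormalizationMonoid
    letI : NormalizedGCDMonoid R := UniqueFactorizationMonoid.toNormalizedGCDMonoid R
    set p : Polynomial FR := F₁.map (algebraMap R FR) with hp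
    have hpirr : Irreducible p :=
      (hF₁prim.irreducible_iff_irreducible_map_fraction_map (K := FR)).mp hF₁
    -- roots
    have hmapmap : p.map (algebraMap FR FS) = (F₁.map m).map (algebraMap S FS) := by
      rw [hp, Polynomial.map_map, Polynomial.map_map, ← IsScalarTower.algebraMap_eq R FR FS,
        IsScalarTower.algebraMap_eq R S FS]; rfl
    have hroot : ∀ (s : S), (X - C s) ∣ F₁.map m → aeval (algebraMap S FS s) p = 0 := by
      intro s hs
      have h2 := Polynomial.map_dvd (algebraMap S FS) hs
      rw [Polynomial.map_sub, Polynomial.map_X, Polynomial.map_C, ← hmapmap] at h2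
      have h3 := (Polynomial.dvd_iff_isRoot).mp h2
      rwa [Polynomial.IsRoot.def, Polynomial.eval_map, ← Polynomial.aeval_def] at h3
    have hroot₁ : aeval θ₁ p = 0 := hroot s₁ hid
    have hroot₂ : aeval θ₂ p = 0 := hroot s₂ hτ
    -- f maps to a product of linear factors over FS
    set ι : N →+* FS := algebraMap N FS with hι
    set q : Polynomial FR := f.map (algebraMap K FR) with hq
    have hfFS : q.map (algebraMap FR FS) = ∏ i, (X - C (ι (α i))) := by
      rw [hq, Polynomial.map_map, ← IsScalarTower.algebraMap_eq K FR FS,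
        IsScalarTower.algebraMap_eq K N FS, ← Polynomial.map_map, hroots,
        Polynomial.map_prod]
      simp
      rfl
    have hq0 : q ≠ 0 := (hm.map _).ne_zero
    have hqsplits : Splits (q.map (algebraMap FR FS)) := by
      rw [hfFS]
      exact Splits.prod fun i _ => Splits.X_sub_C _
    have haev : ∀ x : FS, aeval x q = ∏ i, (x - ι (α i)) := by
      intro x
      rw [Polynomial.aeval_def, ← Polynomial.eval_map, hfFS]
      simp [Polynomial.eval_prod]
    have croots : ∀ x : FS, aeval x q = 0 → ∃ i, x = ι (α i) := by
      intro x hx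
      rw [haev] at hx
      obtain ⟨i, -, hi⟩ := Finset.prod_eq_zero_iff.mp hx
      exact ⟨i, sub_eq_zero.mp hi⟩
    have rmem : ∀ i, ι (α i) ∈ q.rootSet FS := by
      intro i
      rw [Polynomial.mem_rootSet]
      refine ⟨hq0, ?_⟩
      rw [haev]
      exact Finset.prod_eq_zero (Finset.mem_univ i) (sub_self _)
    -- the adjoin claim
    set T : IntermediateField FR FS := IntermediateField.adjoin FR (q.rootSet FS) with hT'
    have hNroots : ∀ x ∈ f.rootSet N, ∃ i, x = α i := by
      intro x hx
      have hx' := Polynomial.aeval_eq_zero_of_mem_rootSet hx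
      have : Polynomial.eval x (f.map (algebraMap K N)) = 0 := by
        rwa [Polynomial.eval_map, ← Polynomial.aeval_def]
      rw [hroots] at this
      simp only [Polynomial.eval_prod, Polynomial.eval_sub, Polynomial.eval_X,
        Polynomial.eval_C] at this
      obtain ⟨i, -, hi⟩ := Finset.prod_eq_zero_iff.mp this
      exact ⟨i, sub_eq_zero.mp hi⟩
    have hNmem : ∀ y : N, ι y ∈ T := by
      intro y
      have hy : y ∈ Algebra.adjoin K (f.rootSet N) := by
        rw [Polynomial.IsSplittingField.adjoin_rootSet]; trivial
      refine Algebra.adjoin_induction ?_ ?_ ?_ ?_ hy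
      · intro x hx
        obtain ⟨i, rfl⟩ := hNroots x hx
        exact IntermediateField.subset_adjoin _ _ (rmem i)
      · intro c
        have : ι (algebraMap K N c) = algebraMap FR FS (algebraMap K FR c) := by
          rw [← IsScalarTower.algebraMap_apply K FR FS, IsScalarTower.algebraMap_apply K N FS]
        rw [this]
        exact T.algebraMap_mem _
      · intro a b _ _ ha hb; rw [map_add]; exact T.add_mem ha hb
      · intro a b _ _ ha hb; rw [map_mul]; exact T.mul_mem ha hb
    have hXmem : ∀ i : Fin n, algebraMap S FS (MvPolynomial.X i) ∈ T := by
      intro i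
      have : algebraMap S FS (MvPolynomial.X i)
          = algebraMap FR FS (algebraMap R FR (MvPolynomial.X i)) := by
        rw [← IsScalarTower.algebraMap_apply R FR FS, IsScalarTower.algebraMap_apply R S FS]
        show algebraMap S FS (MvPolynomial.X i) = algebraMap S FS (m (MvPolynomial.X i))
        rw [hm', MvPolynomial.map_X]
      rw [this]
      exact T.algebraMap_mem _
    have hSmem : ∀ s : S, algebraMap S FS s ∈ T := by
      intro s
      refine MvPolynomial.induction_on (motive := fun t => algebraMap S FS t ∈ T) s ?_ ?_ ?_
      · intro y; exact hNmem y
      · intro p1 p2 h1 h2; rw [map_add]; exact T.add_mem h1 h2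
      · intro p1 i h1; rw [map_mul]; exact T.mul_mem h1 (hXmem i)
    have hTtop : T = ⊤ := by
      rw [eq_top_iff]
      intro z _
      obtain ⟨x, y, -, rfl⟩ := IsFractionRing.div_surjective (A := S) z
      exact T.div_mem (hSmem x) (hSmem y)
    haveI hsplit : IsSplittingField FR FS q := by
      constructor
      · exact hqsplits
      · have halg : ∀ x ∈ q.rootSet FS, IsAlgebraic FR x := by
          intro x hx
          rw [Polynomial.mem_rootSet] at hx
          exact ⟨q, hx.1, hx.2⟩
        rw [← IntermediateField.adjoin_toSubalgebra_of_isAlgebraic halg,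
          show IntermediateField.adjoin FR (q.rootSet FS) = ⊤ from hTtop]
        exact IntermediateField.top_toSubalgebra
    haveI hnormal : Normal FR FS := Normal.of_isSplittingField q
    -- get the FR-automorphism
    have halgθ : IsAlgebraic FR θ₁ := ⟨p, hpirr.ne_zero, hroot₁⟩
    have hmin : aeval θ₂ (minpoly FR θ₁) = 0 := by
      rw [← minpoly.eq_of_irreducible hpirr hroot₁, map_mul, hroot₂, zero_mul]
    obtain ⟨φ, hφ⟩ := minpoly.exists_algEquiv_of_root' (K := FR) halgθ hmin
    -- restrict φ to an automorphism of N over K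
    set φa : FS →ₐ[K] FS := (φ.toAlgHom.restrictScalars K) with hφa
    set ιa : N →ₐ[K] FS := IsScalarTower.toAlgHom K N FS with hιa
    have hιaι : ∀ y : N, ιa y = ι y := fun y => rfl
    have hφroot : ∀ i : Fin n, ∃ j, φ (ι (α i)) = ι (α j) := by
      intro i
      apply croots
      have : aeval (φ (ι (α i))) q = φ (aeval (ι (α i)) q) :=
        Polynomial.aeval_algHom_apply φ.toAlgHom (ι (α i)) q
      rw [this, (Polynomial.mem_rootSet.mp (rmem i)).2, map_zero]
    have hrange : ∀ y : N, φa (ιa y) ∈ ιa.range := by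
      intro y
      have hy : y ∈ Algebra.adjoin K (f.rootSet N) := by
        rw [Polynomial.IsSplittingField.adjoin_rootSet]; trivial
      refine Algebra.adjoin_induction ?_ ?_ ?_ ?_ hy
      · intro x hx
        obtain ⟨i, rfl⟩ := hNroots x hx
        obtain ⟨j, hj⟩ := hφroot i
        exact ⟨α j, hj.symm⟩
      · intro c
        refine ⟨algebraMap K N c, ?_⟩
        show ιa (algebraMap K N c) = φa (ιa (algebraMap K N c))
        rw [ιa.commutes, φa.commutes]
      · intro a b _ _ ha hb; rw [map_add, map_add]; exact ιa.range.add_mem ha hb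
      · intro a b _ _ ha hb; rw [map_mul, map_mul]; exact ιa.range.mul_mem ha hb
    set e : N ≃ₐ[K] ιa.range := AlgEquiv.ofInjectiveField ιa with he
    have hcoe : ∀ y : N, ((e y : ιa.range) : FS) = ιa y := fun y => rfl
    set ψ : N →ₐ[K] N :=
      (e.symm.toAlgHom).comp ((φa.comp ιa).codRestrict ιa.range hrange) with hψdef
    have hψι : ∀ y : N, ιa (ψ y) = φa (ιa y) := by
      intro y
      have h1 : ψ y = e.symm ⟨φa (ιa y), hrange y⟩ := rfl
      rw [h1, ← hcoe, e.apply_symm_apply]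
    -- φ fixes the variables
    have hφx : ∀ i : Fin n, φ (algebraMap S FS (MvPolynomial.X i))
        = algebraMap S FS (MvPolynomial.X i) := by
      intro i
      have hx : algebraMap S FS (MvPolynomial.X i)
          = algebraMap FR FS (algebraMap R FR (MvPolynomial.X i)) := by
        rw [← IsScalarTower.algebraMap_apply R FR FS, IsScalarTower.algebraMap_apply R S FS]
        show algebraMap S FS (MvPolynomial.X i) = algebraMap S FS (m (MvPolynomial.X i))
        rw [hm', MvPolynomial.map_X]
      rw [hx, φ.commutes]
    -- compute φ θ₁
    have e₁ : φ θ₁ = algebraMap S FS (∑ i, MvPolynomial.C (ψ (α i)) * MvPolynomial.X i) := by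
      rw [hθ₁, hs₁, map_sum, map_sum, map_sum]
      refine Finset.sum_congr rfl fun i _ => ?_
      rw [map_mul, map_mul, map_mul, hφx i]
      congr 1
      have : algebraMap S FS (MvPolynomial.C (ψ (α i))) = ιa (ψ (α i)) := rfl
      rw [this, hψι]
      rfl
    have e₂ : θ₂ = algebraMap S FS (∑ i, MvPolynomial.C (α (τ i)) * MvPolynomial.X i) := rfl
    have keyS : (∑ i, MvPolynomial.C (ψ (α i)) * MvPolynomial.X i : S)
        = ∑ i, MvPolynomial.C (α (τ i)) * MvPolynomial.X i := by
      apply IsFractionRing.injective S FS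
      rw [← e₁, hφ, e₂]
    have hψα : ∀ i, ψ (α i) = α (τ i) := sum_CX_inj _ _ keyS
    haveI : Normal K N := Normal.of_isSplittingField f
    exact ⟨AlgEquiv.ofBijective ψ (AlgHom.normal_bijective K N N ψ), fun i => hψα i⟩
end

section
/- Let K be any field. The generic monic polynomial f = x^n + v_{n−1} x^{n−1} + ⋯ + v_0 over K(v_0, …, v_{n−1}) is separable, i.e., it has n distinct roots in an algebraic closure of K(v_0, …, v_{n−1}). -/
open Polynomial

private lemma prime_gen (K : Type) [Field K] (m : ℕ) :
    Prime (MvPolynomial.X 0 ^ (m+1) + ∑ i : Fin (m+1),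
      MvPolynomial.X i.succ * MvPolynomial.X 0 ^ (i:ℕ) : MvPolynomial (Fin (m+2)) K) := by
  set G : MvPolynomial (Fin (m+2)) K := MvPolynomial.X 0 ^ (m+1) + ∑ i : Fin (m+1),
      MvPolynomial.X i.succ * MvPolynomial.X 0 ^ (i:ℕ) with hG
  set A : MvPolynomial (Fin (m+1)) K := MvPolynomial.X 0 ^ (m+1) +
      ∑ i ∈ Finset.univ.erase (0 : Fin (m+1)), MvPolynomial.X i * MvPolynomial.X 0 ^ (i:ℕ)
    with hA
  set B : MvPolynomial (Fin (m+2)) K := MvPolynomial.X 0 ^ (m+1) +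
      ∑ i ∈ Finset.univ.erase (0 : Fin (m+1)), MvPolynomial.X i.succ * MvPolynomial.X 0 ^ (i:ℕ)
    with hB
  set u : Fin (m+2) → MvPolynomial (Fin (m+1)) K :=
    Fin.cases (MvPolynomial.X 0) (fun j => if j = 0 then -A else MvPolynomial.X j) with hu
  set φ : MvPolynomial (Fin (m+2)) K →ₐ[K] MvPolynomial (Fin (m+1)) K :=
    MvPolynomial.aeval u with hφ
  have hsum : ∀ (M : Type) [CommRing M] (f : Fin (m+1) → M),
      ∑ i : Fin (m+1), f i = f 0 + ∑ i ∈ Finset.univ.erase (0 : Fin (m+1)), f i := by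
    intro M _ f
    rw [Finset.add_sum_erase _ _ (Finset.mem_univ 0)]
  have hφG : φ G = 0 := by
    rw [hG]
    simp only [map_add, map_pow, map_sum, map_mul, MvPolynomial.aeval_X, hφ]
    rw [hsum]
    simp only [hu, Fin.cases_zero, Fin.cases_succ, if_pos rfl]
    rw [Finset.sum_congr rfl (fun i hi => by
      rw [if_neg (Finset.ne_of_mem_erase hi)])]
    simp only [if_true, Fin.val_zero, pow_zero, mul_one]
    ring
  -- quotient setup
  set I : Ideal (MvPolynomial (Fin (m+2)) K) := Ideal.span {G} with hI
  set φ' : (MvPolynomial (Fin (m+2)) K ⧸ I) →ₐ[K] MvPolynomial (Fin (m+1)) K :=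
    Ideal.Quotient.liftₐ I φ (by
      intro a ha
      rw [hI, Ideal.mem_span_singleton] at ha
      obtain ⟨c, rfl⟩ := ha
      rw [map_mul, hφG, zero_mul]) with hφ'
  set ψ : MvPolynomial (Fin (m+1)) K →ₐ[K] (MvPolynomial (Fin (m+2)) K ⧸ I) :=
    MvPolynomial.aeval (fun j : Fin (m+1) =>
      Ideal.Quotient.mk I (MvPolynomial.X (if j = 0 then 0 else j.succ))) with hψ
  have hφ'mk : ∀ x, φ' (Ideal.Quotient.mk I x) = φ x := by
    intro x; rw [hφ']; exact Ideal.Quotient.liftₐ_apply _ _ _ _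
  have hψ0 : ψ (MvPolynomial.X 0) = Ideal.Quotient.mk I (MvPolynomial.X 0) := by
    simp [hψ]
  have hψA : ψ A = Ideal.Quotient.mk I B := by
    have hsum2 : ∀ i ∈ Finset.univ.erase (0 : Fin (m+1)),
        ψ (MvPolynomial.X i * MvPolynomial.X 0 ^ (i:ℕ)) =
          Ideal.Quotient.mk I (MvPolynomial.X i.succ * MvPolynomial.X 0 ^ (i:ℕ)) := by
      intro i hi
      have hi0 := Finset.ne_of_mem_erase hi
      rw [map_mul, map_pow, hψ0, hψ, MvPolynomial.aeval_X, if_neg hi0, ← map_pow, ← map_mul]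
    rw [hA, hB, map_add, map_sum, Finset.sum_congr rfl hsum2, map_pow, hψ0,
      ← map_pow, ← map_sum, ← map_add]
  have key : ψ.comp φ = Ideal.Quotient.mkₐ K I := by
    apply MvPolynomial.algHom_ext
    intro k
    induction k using Fin.cases with
    | zero =>
      simp [hφ, hu, hψ]
    | succ j =>
      by_cases hj : j = 0
      · subst hj
        have h1 : φ (MvPolynomial.X (Fin.succ 0)) = -A := by
          rw [hφ, MvPolynomial.aeval_X, hu]
          simp only [Fin.cases_succ, if_true]
        rw [AlgHom.comp_apply, h1, map_neg, hψA, Ideal.Quotient.mkₐ_eq_mk, ← map_neg,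
          Ideal.Quotient.eq]
        have hBG : -B - MvPolynomial.X (Fin.succ 0) = -G := by
          rw [hB, hG, hsum _ (fun i : Fin (m+1) =>
            MvPolynomial.X i.succ * MvPolynomial.X 0 ^ (i:ℕ))]
          simp only [Fin.val_zero, pow_zero, mul_one]
          ring
        rw [hBG]
        exact neg_mem (Ideal.subset_span (Set.mem_singleton G))
      · rw [AlgHom.comp_apply, hφ, MvPolynomial.aeval_X, hu]
        simp only [Fin.cases_succ, if_neg hj, hψ, MvPolynomial.aeval_X,
          Ideal.Quotient.mkₐ_eq_mk]
  have key2 : φ'.comp ψ = AlgHom.id K (MvPolynomial (Fin (m+1)) K) := by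
    apply MvPolynomial.algHom_ext
    intro j
    rw [AlgHom.comp_apply, hψ, MvPolynomial.aeval_X, hφ'mk, hφ, MvPolynomial.aeval_X, hu]
    by_cases hj : j = 0
    · subst hj; simp
    · rw [if_neg hj]
      simp only [Fin.cases_succ, if_neg hj, AlgHom.id_apply]
  have e : (MvPolynomial (Fin (m+2)) K ⧸ I) ≃ₐ[K] MvPolynomial (Fin (m+1)) K :=
    AlgEquiv.ofAlgHom φ' ψ key2 (by
      apply AlgHom.ext
      intro q
      obtain ⟨x, rfl⟩ := Ideal.Quotient.mk_surjective q
      rw [AlgHom.comp_apply, hφ'mk x, AlgHom.id_apply]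
      have := DFunLike.congr_fun key x
      rw [AlgHom.comp_apply, Ideal.Quotient.mkₐ_eq_mk] at this
      exact this)
  have hGF : (MvPolynomial.finSuccEquiv K (m+1)) G =
      (X ^ (m+1) + ∑ i : Fin (m+1), C (MvPolynomial.X i) * X ^ (i:ℕ)) := by
    simp [hG, MvPolynomial.finSuccEquiv_X_zero, MvPolynomial.finSuccEquiv_X_succ]
  have hFmonic : (X ^ (m+1) + ∑ i : Fin (m+1), C (MvPolynomial.X i) * X ^ (i:ℕ) :
      (MvPolynomial (Fin (m+1)) K)[X]).Monic := by
    apply monic_X_pow_add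
    refine lt_of_le_of_lt (degree_sum_le _ _) ?_
    rw [Finset.sup_lt_iff (by exact_mod_cast WithBot.bot_lt_coe (m+1))]
    intro i _
    refine lt_of_le_of_lt (degree_C_mul_X_pow_le _ _) ?_
    exact_mod_cast i.isLt
  have hG0 : G ≠ 0 := by
    intro h
    apply hFmonic.ne_zero
    rw [← hGF, h, map_zero]
  have hdom : IsDomain (MvPolynomial (Fin (m+2)) K ⧸ I) :=
    MulEquiv.isDomain _ e.toMulEquiv
  have hprime : I.IsPrime := (Ideal.Quotient.isDomain_iff_prime I).mp hdom
  rw [hI] at hprime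
  exact (Ideal.span_singleton_prime hG0).mp hprime

set_option maxHeartbeats 1000000 in
set_option synthInstance.maxHeartbeats 1000000 in
/-- The generic monic polynomial `f = xⁿ + v_{n−1} x^{n−1} + ⋯ + v₀` over
`K(v₀, …, v_{n−1})` is separable, i.e. it has `n` distinct roots in an algebraic
closure. -/
theorem stmt9 (K : Type) [Field K] (n : ℕ) :
    (X ^ n + ∑ i : Fin n,
        C (algebraMap (MvPolynomial (Fin n) K) (FractionRing (MvPolynomial (Fin n) K))
          (MvPolynomial.X i)) * X ^ (i : ℕ) :
        (FractionRing (MvPolynomial (Fin n) K))[X]).Separable ∧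
    Multiset.card ((X ^ n + ∑ i : Fin n,
        C (algebraMap (MvPolynomial (Fin n) K) (FractionRing (MvPolynomial (Fin n) K))
          (MvPolynomial.X i)) * X ^ (i : ℕ) :
        (FractionRing (MvPolynomial (Fin n) K))[X]).aroots
        (AlgebraicClosure (FractionRing (MvPolynomial (Fin n) K)))) = n ∧
    ((X ^ n + ∑ i : Fin n,
        C (algebraMap (MvPolynomial (Fin n) K) (FractionRing (MvPolynomial (Fin n) K))
          (MvPolynomial.X i)) * X ^ (i : ℕ) :
        (FractionRing (MvPolynomial (Fin n) K))[X]).aroots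
        (AlgebraicClosure (FractionRing (MvPolynomial (Fin n) K)))).Nodup := by
  obtain _ | m := n
  · constructor
    · simpa using separable_one (R := FractionRing (MvPolynomial (Fin 0) K))
    constructor
    · simp
    · simp
  set R := MvPolynomial (Fin (m+1)) K with hR
  set L := FractionRing R with hL
  set M := AlgebraicClosure L with hM
  set F : R[X] := X ^ (m+1) + ∑ i : Fin (m+1), C (MvPolynomial.X i) * X ^ (i:ℕ) with hF
  set f : L[X] := X ^ (m+1) + ∑ i : Fin (m+1),
      C (algebraMap R L (MvPolynomial.X i)) * X ^ (i:ℕ) with hf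
  have hsumdeg : (∑ i : Fin (m+1), C (MvPolynomial.X i : R) * X ^ (i:ℕ)).degree
      < ((m+1 : ℕ) : WithBot ℕ) := by
    refine lt_of_le_of_lt (degree_sum_le _ _) ?_
    rw [Finset.sup_lt_iff (by exact_mod_cast WithBot.bot_lt_coe (m+1))]
    intro i _
    refine lt_of_le_of_lt (degree_C_mul_X_pow_le _ _) ?_
    exact_mod_cast i.isLt
  have hFmonic : F.Monic := monic_X_pow_add hsumdeg
  have hFprime : Prime F := by
    have h := prime_gen K m
    rw [← MulEquiv.prime_iff (MvPolynomial.finSuccEquiv K (m+1)).toMulEquiv] at h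
    convert h using 1
    rw [hF]
    simp [MvPolynomial.finSuccEquiv_X_zero, MvPolynomial.finSuccEquiv_X_succ]
  have hmap : f = F.map (algebraMap R L) := by
    rw [hf, hF]
    simp [Polynomial.map_add, Polynomial.map_pow, Polynomial.map_sum, Polynomial.map_mul,
      Polynomial.map_C, Polynomial.map_X]
  have hfirr : Irreducible f := by
    rw [hmap]
    exact (hFmonic.irreducible_iff_irreducible_map_fraction_map).mp hFprime.irreducible
  have hfdeg : f.natDegree = m + 1 := by
    rw [hmap, hFmonic.natDegree_map]
    have : F.degree = ((m+1 : ℕ) : WithBot ℕ) := by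
      rw [hF, degree_add_eq_left_of_degree_lt (by rwa [degree_X_pow]), degree_X_pow]
    exact natDegree_eq_of_degree_eq_some this
  have hcoeff1 : f.coeff 1 ≠ 0 := by
    rw [hf, coeff_add, coeff_X_pow, finset_sum_coeff]
    have hterm : ∀ i : Fin (m+1),
        (C (algebraMap R L (MvPolynomial.X i)) * X ^ (i:ℕ)).coeff 1 =
          if (i:ℕ) = 1 then algebraMap R L (MvPolynomial.X i) else 0 := by
      intro i
      rw [coeff_C_mul, coeff_X_pow]
      by_cases h : (i:ℕ) = 1 <;> simp [h, eq_comm]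
    rw [Finset.sum_congr rfl (fun i _ => hterm i)]
    obtain _ | m' := m
    · -- n = 1 : coeff is 1 + 0
      simp
    · -- n ≥ 2
      rw [if_neg (by omega)]
      rw [Finset.sum_eq_single (⟨1, by omega⟩ : Fin (m'+2))]
      · rw [if_pos rfl, zero_add]
        intro hc
        exact MvPolynomial.X_ne_zero _ ((IsFractionRing.injective R L) (by simpa using hc))
      · intro i _ hi
        rw [if_neg (fun h => hi (Fin.ext h))]
      · intro h
        exact absurd (Finset.mem_univ _) h
  have hsep : f.Separable := by
    rw [separable_iff_derivative_ne_zero hfirr]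
    intro h
    apply hcoeff1
    have := congrArg (fun p => Polynomial.coeff p 0) h
    simpa [coeff_derivative] using this
  have hsplits : Splits (f.map (algebraMap L M)) := IsAlgClosed.splits _
  refine ⟨hsep, ?_, ?_⟩
  · rw [aroots_def]
    exact hsplits.natDegree_eq_card_roots.symm.trans ((natDegree_map _).trans hfdeg)
  · exact nodup_roots (hsep.map)
end

section
/- Let K be a field and let w_1, …, w_n be algebraically independent indeterminates over K. Then x^n + e_{n−1} x^{n−1} + ⋯ + e_0 = ∏_{i=1}^n (x − w_i), where e_i = ±(the (n−i)-th elementary symmetric polynomial in w_1, …, w_n), and the Galois group of K(w_1, …, w_n) over K(e_0, …, e_{n−1}) is the full symmetric group S_n. -/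
set_option maxHeartbeats 1000000
set_option synthInstance.maxHeartbeats 400000

open Polynomial

/-- With algebraically independent `w₁, …, wₙ` over `K` and
`eᵢ = (−1)^{n−i} σ_{n−i}(w₁,…,wₙ)`, we have
`xⁿ + e_{n−1} x^{n−1} + ⋯ + e₀ = ∏ᵢ (x − wᵢ)`, and the Galois group of
`K(w₁,…,wₙ)` over `K(e₀,…,e_{n−1})` is the full symmetric group `Sₙ`
(acting by permuting the `wᵢ`). -/
theorem stmt11 (K : Type) [Field K] (n : ℕ) :
    ∀ w e : Fin n → FractionRing (MvPolynomial (Fin n) K),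
    (w = fun i : Fin n => algebraMap (MvPolynomial (Fin n) K)
        (FractionRing (MvPolynomial (Fin n) K)) (MvPolynomial.X i)) →
    (e = fun i : Fin n => algebraMap (MvPolynomial (Fin n) K)
        (FractionRing (MvPolynomial (Fin n) K))
        ((-1) ^ (n - (i : ℕ)) * MvPolynomial.esymm (Fin n) K (n - (i : ℕ)))) →
    ((X ^ n + ∑ i : Fin n, C (e i) * X ^ (i : ℕ) :
        (FractionRing (MvPolynomial (Fin n) K))[X]) = ∏ i, (X - C (w i))) ∧
    ∃ φ : (FractionRing (MvPolynomial (Fin n) K)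
            ≃ₐ[IntermediateField.adjoin K (Set.range e)]
          FractionRing (MvPolynomial (Fin n) K)) ≃* Equiv.Perm (Fin n),
      ∀ ψ i, ψ (w i) = w (φ ψ i) := by
  classical
  intro w e hw he
  have hwi : ∀ i, w i = algebraMap (MvPolynomial (Fin n) K) (FractionRing (MvPolynomial (Fin n) K)) (MvPolynomial.X i) := fun i => by rw [hw]
  have hei : ∀ i : Fin n, e i = algebraMap (MvPolynomial (Fin n) K) (FractionRing (MvPolynomial (Fin n) K))
      ((-1) ^ (n - (i : ℕ)) * MvPolynomial.esymm (Fin n) K (n - (i : ℕ))) := fun i => by rw [he]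
  have hKinj : Function.Injective (algebraMap (MvPolynomial (Fin n) K) (FractionRing (MvPolynomial (Fin n) K))) := IsFractionRing.injective (MvPolynomial (Fin n) K) (FractionRing (MvPolynomial (Fin n) K))
  have hwinj : Function.Injective w := by
    intro i j h
    rw [hwi i, hwi j] at h
    exact MvPolynomial.X_injective (hKinj h)
  -- algebraMap = aeval w
  have halg : ∀ p : (MvPolynomial (Fin n) K), algebraMap (MvPolynomial (Fin n) K) (FractionRing (MvPolynomial (Fin n) K)) p = MvPolynomial.aeval w p := by
    intro p
    have h : (IsScalarTower.toAlgHom K (MvPolynomial (Fin n) K) (FractionRing (MvPolynomial (Fin n) K))) = MvPolynomial.aeval w :=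
      MvPolynomial.algHom_ext fun i => by simp [hwi i]
    exact AlgHom.congr_fun h p
  -- esymm of the multiset of roots
  have hesymm : ∀ j, (Multiset.map w Finset.univ.val).esymm j
      = algebraMap (MvPolynomial (Fin n) K) (FractionRing (MvPolynomial (Fin n) K)) (MvPolynomial.esymm (Fin n) K j) := by
    intro j
    rw [halg, MvPolynomial.aeval_esymm_eq_multiset_esymm]
  -- Vieta
  have hprod : (∏ i, (X - C (w i)) : (FractionRing (MvPolynomial (Fin n) K))[X]) = ∑ j ∈ Finset.range (n + 1),
      (-1) ^ j * (C (algebraMap (MvPolynomial (Fin n) K) (FractionRing (MvPolynomial (Fin n) K)) (MvPolynomial.esymm (Fin n) K j)) * X ^ (n - j)) := by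
    have hs := Multiset.prod_X_sub_X_eq_sum_esymm (Multiset.map w Finset.univ.val)
    have hcard : Multiset.card (Multiset.map w Finset.univ.val) = n := by simp
    rw [hcard] at hs
    simp only [hesymm] at hs
    rw [← hs, Multiset.map_map, Finset.prod_eq_multiset_prod]
    rfl
  have hpart1 : (X ^ n + ∑ i : Fin n, C (e i) * X ^ (i : ℕ) : (FractionRing (MvPolynomial (Fin n) K))[X]) = ∏ i, (X - C (w i)) := by
    rw [hprod]
    rw [Finset.sum_range_succ'
      (fun j => (-1) ^ j * (C (algebraMap (MvPolynomial (Fin n) K) (FractionRing (MvPolynomial (Fin n) K)) (MvPolynomial.esymm (Fin n) K j)) * X ^ (n - j))) n]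
    have hf0 : ((-1 : (FractionRing (MvPolynomial (Fin n) K))[X]) ^ (0:ℕ) *
        (C (algebraMap (MvPolynomial (Fin n) K) (FractionRing (MvPolynomial (Fin n) K)) (MvPolynomial.esymm (Fin n) K 0)) * X ^ (n - 0)) : (FractionRing (MvPolynomial (Fin n) K))[X]) = X ^ n := by
      simp [MvPolynomial.esymm_zero]
    rw [hf0]
    have hrefl := Finset.sum_range_reflect
      (fun j => ((-1) ^ (j+1) *
        (C (algebraMap (MvPolynomial (Fin n) K) (FractionRing (MvPolynomial (Fin n) K)) (MvPolynomial.esymm (Fin n) K (j+1))) * X ^ (n - (j+1))) : (FractionRing (MvPolynomial (Fin n) K))[X])) n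
    rw [add_comm]
    congr 1
    rw [← hrefl]
    rw [← Fin.sum_univ_eq_sum_range (fun j => ((-1) ^ (n - 1 - j + 1) *
        (C (algebraMap (MvPolynomial (Fin n) K) (FractionRing (MvPolynomial (Fin n) K)) (MvPolynomial.esymm (Fin n) K (n - 1 - j + 1)))
          * X ^ (n - (n - 1 - j + 1))) : (FractionRing (MvPolynomial (Fin n) K))[X])) n]
    apply Finset.sum_congr rfl
    intro i _
    have hi : (i : ℕ) < n := i.2
    have h1 : n - 1 - (i : ℕ) + 1 = n - (i : ℕ) := by omega
    have h2 : n - (n - (i : ℕ)) = (i : ℕ) := by omega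
    rw [h1, h2, hei i]
    simp only [map_mul, map_pow, map_neg, map_one]
    ring
  refine ⟨hpart1, ?_⟩
  -- Galois part
  have heF : ∀ i, e i ∈ IntermediateField.adjoin K (Set.range e) :=
    fun i => IntermediateField.subset_adjoin _ _ ⟨i, rfl⟩
  let gK : Equiv.Perm (Fin n) → ((FractionRing (MvPolynomial (Fin n) K)) ≃ₐ[K] (FractionRing (MvPolynomial (Fin n) K))) := fun σ =>
    IsFractionRing.algEquivOfAlgEquiv (MvPolynomial.renameEquiv K σ)
  have hgK : ∀ σ (p : (MvPolynomial (Fin n) K)), gK σ (algebraMap (MvPolynomial (Fin n) K) (FractionRing (MvPolynomial (Fin n) K)) p) = algebraMap (MvPolynomial (Fin n) K) (FractionRing (MvPolynomial (Fin n) K)) (MvPolynomial.rename σ p) :=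
    fun σ p => IsFractionRing.algEquivOfAlgEquiv_algebraMap _ p
  have hgKw : ∀ σ i, gK σ (w i) = w (σ i) := by
    intro σ i
    rw [hwi, hgK, MvPolynomial.rename_X, ← hwi]
  have hgKe : ∀ σ i, gK σ (e i) = e i := by
    intro σ i
    rw [hei, hgK]
    congr 1
    rw [map_mul, map_pow, map_neg, map_one, MvPolynomial.rename_esymm]
  have hgKF : ∀ σ, ∀ x ∈ IntermediateField.adjoin K (Set.range e), gK σ x = x := by
    intro σ x hx
    induction hx using IntermediateField.adjoin_induction with
    | mem x hx => obtain ⟨i, rfl⟩ := hx; exact hgKe σ i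
    | algebraMap x => exact (gK σ).commutes x
    | add x y _ _ hx hy => rw [map_add, hx, hy]
    | inv x _ hx => rw [map_inv₀, hx]
    | mul x y _ _ hx hy => rw [map_mul, hx, hy]
  let ι : Equiv.Perm (Fin n) → ((FractionRing (MvPolynomial (Fin n) K)) ≃ₐ[IntermediateField.adjoin K (Set.range e)] (FractionRing (MvPolynomial (Fin n) K))) := fun σ =>
    { gK σ with commutes' := fun x => hgKF σ x.1 x.2 }
  have hιapp : ∀ σ (x : (FractionRing (MvPolynomial (Fin n) K))), ι σ x = gK σ x := fun _ _ => rfl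
  have hιw : ∀ σ i, ι σ (w i) = w (σ i) := fun σ i => hgKw σ i
  have ext' : ∀ f g : ((FractionRing (MvPolynomial (Fin n) K)) ≃ₐ[IntermediateField.adjoin K (Set.range e)] (FractionRing (MvPolynomial (Fin n) K))),
      (∀ p : (MvPolynomial (Fin n) K), f (algebraMap (MvPolynomial (Fin n) K) (FractionRing (MvPolynomial (Fin n) K)) p) = g (algebraMap (MvPolynomial (Fin n) K) (FractionRing (MvPolynomial (Fin n) K)) p)) → f = g := by
    intro f g h
    apply AlgEquiv.ext
    intro x
    obtain ⟨a, b, hb, rfl⟩ := IsFractionRing.div_surjective (A := (MvPolynomial (Fin n) K)) x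
    rw [map_div₀, map_div₀, h, h]
  have hmul : ∀ σ τ, ι (σ * τ) = ι σ * ι τ := by
    intro σ τ
    apply ext'
    intro p
    rw [AlgEquiv.mul_apply, hιapp, hιapp, hιapp, hgK, hgK, hgK, MvPolynomial.rename_rename]
    congr 1
  let ιhom : Equiv.Perm (Fin n) →* ((FractionRing (MvPolynomial (Fin n) K)) ≃ₐ[IntermediateField.adjoin K (Set.range e)] (FractionRing (MvPolynomial (Fin n) K))) :=
    MonoidHom.mk' ι hmul
  have hinj : Function.Injective ιhom := by
    intro σ τ h
    apply Equiv.ext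
    intro i
    apply hwinj
    rw [← hιw σ i, ← hιw τ i]
    exact congrFun (congrArg (fun (ψ : (FractionRing (MvPolynomial (Fin n) K)) ≃ₐ[IntermediateField.adjoin K (Set.range e)] (FractionRing (MvPolynomial (Fin n) K))) =>
      (ψ : (FractionRing (MvPolynomial (Fin n) K)) → (FractionRing (MvPolynomial (Fin n) K)))) h) (w i)
  have hψe : ∀ (ψ : (FractionRing (MvPolynomial (Fin n) K)) ≃ₐ[IntermediateField.adjoin K (Set.range e)] (FractionRing (MvPolynomial (Fin n) K))) j, ψ (e j) = e j := by
    intro ψ j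
    have h : e j = algebraMap (IntermediateField.adjoin K (Set.range e)) (FractionRing (MvPolynomial (Fin n) K)) ⟨e j, heF j⟩ := rfl
    rw [h, AlgEquiv.commutes]
  have hsurj : Function.Surjective ιhom := by
    intro ψ
    have hroot : ∀ i, ∃ j, ψ (w i) = w j := by
      intro i
      have h1 : (w i) ^ n + ∑ j : Fin n, e j * (w i) ^ (j : ℕ) = 0 := by
        have h := congrArg (Polynomial.eval (w i)) hpart1
        simp only [eval_add, eval_pow, eval_X, eval_finset_sum, eval_mul, eval_C, eval_prod,
          eval_sub] at h
        rw [h, Finset.prod_eq_zero (Finset.mem_univ i) (sub_self (w i))]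
      have h0 : (ψ (w i)) ^ n + ∑ j : Fin n, e j * (ψ (w i)) ^ (j : ℕ) = 0 := by
        have h2 := congrArg ψ h1
        simp only [map_add, map_pow, map_sum, map_mul, map_zero, hψe] at h2
        exact h2
      have h3 : ∏ j, (ψ (w i) - w j) = 0 := by
        have h := congrArg (Polynomial.eval (ψ (w i))) hpart1
        simp only [eval_add, eval_pow, eval_X, eval_finset_sum, eval_mul, eval_C, eval_prod,
          eval_sub] at h
        rw [← h]
        exact h0
      obtain ⟨j, -, hj⟩ := Finset.prod_eq_zero_iff.mp h3
      exact ⟨j, sub_eq_zero.mp hj⟩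
    choose u hu using hroot
    have huinj : Function.Injective u := by
      intro a b hab
      apply hwinj
      apply ψ.injective
      rw [hu a, hu b, hab]
    set σ' : Equiv.Perm (Fin n) := Equiv.ofBijective u (Finite.injective_iff_bijective.mp huinj)
      with hσ'
    refine ⟨σ', ?_⟩
    apply ext'
    intro p
    have hLhom : ∀ (χ : (FractionRing (MvPolynomial (Fin n) K)) ≃ₐ[IntermediateField.adjoin K (Set.range e)] (FractionRing (MvPolynomial (Fin n) K))) (q : (MvPolynomial (Fin n) K)),
        χ (MvPolynomial.aeval w q) = MvPolynomial.aeval (fun i => χ (w i)) q := by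
      intro χ q
      exact MvPolynomial.comp_aeval_apply (f := w)
        (φ := ((χ.restrictScalars K : (FractionRing (MvPolynomial (Fin n) K)) ≃ₐ[K] (FractionRing (MvPolynomial (Fin n) K))) : (FractionRing (MvPolynomial (Fin n) K)) →ₐ[K] (FractionRing (MvPolynomial (Fin n) K)))) q
    have harg : (fun i => (ιhom σ') (w i)) = fun i => ψ (w i) := by
      funext i
      show (ι σ') (w i) = ψ (w i)
      rw [hιw σ' i, hu i]
      rfl
    rw [halg p, hLhom (ιhom σ') p, hLhom ψ p, harg]
  refine ⟨(MulEquiv.ofBijective ιhom ⟨hinj, hsurj⟩).symm, ?_⟩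
  intro ψ i
  have h := (MulEquiv.ofBijective ιhom ⟨hinj, hsurj⟩).apply_symm_apply ψ
  conv_lhs => rw [← h]
  exact hιw _ i
end

section
/- For any field K and any n ≥ 1, the Galois group of the generic polynomial f = x^n + v_{n−1}x^{n−1} + ⋯ + v_0 over K(v_0, …, v_{n−1}) is the full symmetric group S_n. -/
open Polynomial

namespace Stmt12Aux

open MvPolynomial

variable (K : Type) [Field K] (n : ℕ)

/-- The base polynomial ring `K[v₀,…,v_{n-1}]`. -/
abbrev Rg : Type := MvPolynomial (Fin n) K

/-- The base field `K(v₀,…,v_{n-1})`. -/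
abbrev Fg : Type := FractionRing (Rg K n)

/-- A copy of `K(t₀,…,t_{n-1})`, to be viewed as the splitting field. -/
def Lg : Type := FractionRing (Rg K n)

noncomputable instance : Field (Lg K n) :=
  inferInstanceAs (Field (FractionRing (Rg K n)))

noncomputable instance : Algebra (Rg K n) (Lg K n) :=
  inferInstanceAs (Algebra (Rg K n) (FractionRing (Rg K n)))

instance : IsFractionRing (Rg K n) (Lg K n) :=
  inferInstanceAs (IsFractionRing (Rg K n) (FractionRing (Rg K n)))

/-- `vᵢ ↦ (-1)^(n-i) e_{n-i}(t)`. -/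
noncomputable def phi : Rg K n →ₐ[K] Rg K n :=
  aeval fun i : Fin n => (-1) ^ (n - (i : ℕ)) * esymm (Fin n) K (n - (i : ℕ))

noncomputable def uAux : Rg K n →ₐ[K] Rg K n :=
  aeval fun i : Fin n => (-1) ^ (n - (i : ℕ)) * X (Fin.rev i)

noncomputable def vAux : Rg K n →ₐ[K] Rg K n :=
  aeval fun i : Fin n => (-1) ^ (n - ((Fin.rev i) : ℕ)) * X (Fin.rev i)

lemma vAux_comp_uAux : (vAux K n).comp (uAux K n) = AlgHom.id K (Rg K n) := by
  apply MvPolynomial.algHom_ext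
  intro i
  simp only [AlgHom.comp_apply, uAux, vAux, MvPolynomial.aeval_X, map_mul, map_pow, map_neg,
    map_one, AlgHom.id_apply, Fin.rev_rev]
  rw [← mul_assoc, ← mul_pow, neg_mul_neg, one_mul, one_pow, one_mul]

lemma uAux_injective : Function.Injective (uAux K n) := by
  have h : Function.LeftInverse (vAux K n) (uAux K n) := fun p => by
    have := congrArg (fun g : Rg K n →ₐ[K] Rg K n => g p) (vAux_comp_uAux K n)
    simpa using this
  exact h.injective

noncomputable def epsAux : Rg K n →ₐ[K] Rg K n :=
  aeval fun i : Fin n => esymm (Fin n) K ((i : ℕ) + 1)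

lemma epsAux_injective : Function.Injective (epsAux K n) := by
  have h : ∀ p, epsAux K n p = (esymmAlgHom (Fin n) K n p).val := fun p =>
    (esymmAlgHom_apply (σ := Fin n) (R := K) (n := n) p).symm
  have hinj : Function.Injective (esymmAlgHom (Fin n) K n) :=
    esymmAlgHom_injective K (by simp)
  intro a b hab
  apply hinj
  apply Subtype.ext
  rw [← h, ← h, hab]

lemma phi_eq : phi K n = (epsAux K n).comp (uAux K n) := by
  apply MvPolynomial.algHom_ext
  intro i
  have hi : ((Fin.rev i : Fin n) : ℕ) + 1 = n - (i : ℕ) := by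
    have := i.isLt
    simp only [Fin.val_rev]
    omega
  simp only [phi, uAux, epsAux, AlgHom.comp_apply, MvPolynomial.aeval_X, map_mul, map_pow,
    map_neg, map_one, hi]

lemma phi_injective : Function.Injective (phi K n) := by
  rw [phi_eq]
  exact (epsAux_injective K n).comp (uAux_injective K n)

/-- The embedding `K[v] → K(t)`. -/
noncomputable def psi : Rg K n →+* Lg K n :=
  (algebraMap (Rg K n) (Lg K n)).comp (phi K n).toRingHom

lemma psi_injective : Function.Injective (psi K n) :=
  (IsFractionRing.injective (Rg K n) (Lg K n)).comp (phi_injective K n)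

/-- The embedding `K(v) → K(t)`. -/
noncomputable def Psi : Fg K n →+* Lg K n :=
  IsFractionRing.lift (psi_injective K n)

noncomputable instance : Algebra (Fg K n) (Lg K n) :=
  (Psi K n).toAlgebra

lemma algebraMap_FL (p : Rg K n) :
    algebraMap (Fg K n) (Lg K n) (algebraMap (Rg K n) (Fg K n) p)
      = algebraMap (Rg K n) (Lg K n) (phi K n p) :=
  IsFractionRing.lift_algebraMap (psi_injective K n) p

/-- The roots. -/
noncomputable def tg (i : Fin n) : Lg K n := algebraMap (Rg K n) (Lg K n) (X i)

lemma tg_injective : Function.Injective (tg K n) := by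
  intro i j h
  have := IsFractionRing.injective (Rg K n) (Lg K n) h
  exact MvPolynomial.X_injective this

/-- The generic polynomial. -/
noncomputable def fgen : (Fg K n)[X] :=
  Polynomial.X ^ n + ∑ i : Fin n,
    Polynomial.C (algebraMap (MvPolynomial (Fin n) K) (FractionRing (MvPolynomial (Fin n) K))
      (MvPolynomial.X i)) * Polynomial.X ^ (i : ℕ)

lemma fgen_monic (hn : 1 ≤ n) : (fgen K n).Monic := by
  apply monic_X_pow_add
  refine lt_of_le_of_lt (Polynomial.degree_sum_le _ _) ?_
  rw [Finset.sup_lt_iff (by exact_mod_cast WithBot.bot_lt_coe n)]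
  intro i _
  refine lt_of_le_of_lt (degree_C_mul_X_pow_le _ _) ?_
  exact_mod_cast i.isLt

/-- Vieta in `K[t][X]`. -/
lemma lemA :
    (∏ i : Fin n, (Polynomial.X - Polynomial.C (X i : Rg K n)))
      = Polynomial.X ^ n + ∑ i : Fin n,
          Polynomial.C ((-1) ^ (n - (i : ℕ)) * esymm (Fin n) K (n - (i : ℕ)))
            * Polynomial.X ^ (i : ℕ) := by
  classical
  have hs : (∏ i : Fin n, (Polynomial.X - Polynomial.C (X i : Rg K n)))
      = ((Finset.univ.val.map fun i : Fin n => (X i : Rg K n)).map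
          fun t => Polynomial.X - Polynomial.C t).prod := by
    rw [Multiset.map_map]
    rfl
  rw [hs, Multiset.prod_X_sub_X_eq_sum_esymm]
  have hcard : Multiset.card (Finset.univ.val.map fun i : Fin n => (X i : Rg K n)) = n := by
    simp
  have hesymm : ∀ j, (Finset.univ.val.map fun i : Fin n => (X i : Rg K n)).esymm j
      = esymm (Fin n) K j := by
    intro j
    rw [esymm_eq_multiset_esymm]
  simp only [hcard, hesymm]
  rw [Finset.sum_range_succ']
  have h0 : (-1 : (Rg K n)[X]) ^ 0 * (Polynomial.C (esymm (Fin n) K 0)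
      * Polynomial.X ^ (n - 0)) = Polynomial.X ^ n := by
    simp [esymm_zero]
  rw [h0, add_comm]
  congr 1
  rw [Fin.sum_univ_eq_sum_range (fun k => Polynomial.C ((-1 : Rg K n) ^ (n - k)
    * esymm (Fin n) K (n - k)) * Polynomial.X ^ k), ← Finset.sum_range_reflect]
  apply Finset.sum_congr rfl
  intro i hi
  rw [Finset.mem_range] at hi
  have h1 : n - 1 - i + 1 = n - i := by omega
  have h2 : n - (n - i) = i := by omega
  rw [h1, h2]
  have h3 : ((-1 : (Rg K n)[X]) ^ (n - i)) = Polynomial.C ((-1 : Rg K n) ^ (n - i)) := by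
    simp
  rw [h3, ← mul_assoc, ← Polynomial.C_mul]

lemma fgen_map :
    (fgen K n).map (algebraMap (Fg K n) (Lg K n))
      = ∏ i : Fin n, (Polynomial.X - Polynomial.C (tg K n i)) := by
  have hL : (∏ i : Fin n, (Polynomial.X - Polynomial.C (X i : Rg K n))).map
        (algebraMap (Rg K n) (Lg K n))
      = ∏ i : Fin n, (Polynomial.X - Polynomial.C (tg K n i)) := by
    rw [Polynomial.map_prod]
    simp [tg]
  rw [← hL, lemA]
  simp only [fgen, Polynomial.map_add, Polynomial.map_pow, Polynomial.map_X,
    Polynomial.map_sum, Polynomial.map_mul, Polynomial.map_C]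
  congr 1
  apply Finset.sum_congr rfl
  intro i _
  congr 1
  rw [algebraMap_FL]
  congr 1
  simp [phi]

lemma fgen_splits : ((fgen K n).map (algebraMap (Fg K n) (Lg K n))).Splits := by
  rw [fgen_map]
  apply Splits.prod
  intro i _
  exact Splits.X_sub_C _

lemma rootSet_fgen_L : (fgen K n).rootSet (Lg K n) = Set.range (tg K n) := by
  classical
  have haroots : (fgen K n).aroots (Lg K n) = (Finset.univ.image (tg K n)).val := by
    rw [aroots_def, fgen_map]
    have : (∏ i : Fin n, (Polynomial.X - Polynomial.C (tg K n i)))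
        = ∏ a ∈ Finset.univ.image (tg K n), (Polynomial.X - Polynomial.C a) := by
      rw [Finset.prod_image]
      intro i _ j _ h
      exact tg_injective K n h
    rw [this, roots_prod_X_sub_C]
  rw [rootSet_def, haroots]
  ext x
  simp [Finset.val_toFinset, List.mem_ofFn]

lemma tg_mem_rootSet (i : Fin n) : tg K n i ∈ (fgen K n).rootSet (Lg K n) := by
  rw [rootSet_fgen_L]; exact ⟨i, rfl⟩

lemma tg_isIntegral (hn : 1 ≤ n) (i : Fin n) : IsIntegral (Fg K n) (tg K n i) := by
  refine ⟨fgen K n, fgen_monic K n hn, ?_⟩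
  rw [Polynomial.eval₂_eq_eval_map, fgen_map, Polynomial.eval_prod]
  apply Finset.prod_eq_zero (Finset.mem_univ i)
  simp

lemma adjoin_rootSet_L (hn : 1 ≤ n) :
    Algebra.adjoin (Fg K n) ((fgen K n).rootSet (Lg K n) : Set (Lg K n)) = ⊤ := by
  classical
  set S := Algebra.adjoin (Fg K n) ((fgen K n).rootSet (Lg K n) : Set (Lg K n)) with hS
  have hint : Algebra.IsIntegral (Fg K n) S := by
    apply Algebra.IsIntegral.adjoin
    intro x hx
    rw [rootSet_fgen_L] at hx
    obtain ⟨i, rfl⟩ := hx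
    exact tg_isIntegral K n hn i
  have hR : ∀ p : Rg K n, algebraMap (Rg K n) (Lg K n) p ∈ S := by
    intro p
    induction p using MvPolynomial.induction_on with
    | C a =>
        have : algebraMap (Rg K n) (Lg K n) (C a)
            = algebraMap (Fg K n) (Lg K n) (algebraMap (Rg K n) (Fg K n) (C a)) := by
          rw [algebraMap_FL]
          congr 1
          simp [phi, MvPolynomial.aeval_C, MvPolynomial.algebraMap_eq]
        rw [this]
        exact Subalgebra.algebraMap_mem _ _
    | add p q hp hq => rw [map_add]; exact Subalgebra.add_mem _ hp hq
    | mul_X p i hp =>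
        rw [map_mul]
        exact Subalgebra.mul_mem _ hp (Algebra.subset_adjoin (tg_mem_rootSet K n i))
  rw [eq_top_iff]
  intro z _
  obtain ⟨p, q, hq, rfl⟩ := IsFractionRing.div_surjective (A := Rg K n) z
  rw [div_eq_mul_inv]
  refine Subalgebra.mul_mem _ (hR p) ?_
  have hqS : algebraMap (Rg K n) (Lg K n) q ∈ S := hR q
  have hqint : IsIntegral (Fg K n) (algebraMap (Rg K n) (Lg K n) q) := by
    have := Algebra.IsIntegral.isIntegral (R := Fg K n)
      (⟨algebraMap (Rg K n) (Lg K n) q, hqS⟩ : S)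
    exact (isIntegral_algHom_iff S.val Subtype.val_injective).mpr this
  exact hqint.inv_mem hqS

noncomputable def lgIsSplittingField (hn : 1 ≤ n) :
    IsSplittingField (Fg K n) (Lg K n) (fgen K n) :=
  ⟨fgen_splits K n, adjoin_rootSet_L K n hn⟩

/-- The `Sₙ`-action on `L` over `F`. -/
noncomputable def sigmaAut (σ : Equiv.Perm (Fin n)) : Lg K n ≃ₐ[Fg K n] Lg K n := by
  refine AlgEquiv.ofRingEquiv (f := IsFractionRing.ringEquivOfRingEquiv
    (A := Rg K n) (B := Rg K n) (K := Lg K n) (L := Lg K n) (renameEquiv K σ).toRingEquiv) ?_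
  intro x
  have hre : ∀ p : Rg K n, rename (σ : Fin n → Fin n) (phi K n p) = phi K n p := by
    intro p
    have : (rename (σ : Fin n → Fin n)).comp (phi K n) = phi K n := by
      apply MvPolynomial.algHom_ext
      intro i
      simp only [AlgHom.comp_apply, phi, MvPolynomial.aeval_X, map_mul, map_pow, map_neg,
        map_one]
      rw [rename_esymm]
    exact congrArg (fun g : Rg K n →ₐ[K] Rg K n => g p) this
  obtain ⟨p, q, hq, rfl⟩ := IsFractionRing.div_surjective (A := Rg K n) x
  rw [map_div₀, map_div₀]
  congr 1 <;>
  · rw [algebraMap_FL, IsFractionRing.ringEquivOfRingEquiv_algebraMap]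
    congr 1
    simpa using hre _

lemma sigmaAut_tg (σ : Equiv.Perm (Fin n)) (i : Fin n) :
    sigmaAut K n σ (tg K n i) = tg K n (σ i) := by
  have : sigmaAut K n σ (tg K n i) = IsFractionRing.ringEquivOfRingEquiv (A := Rg K n)
      (B := Rg K n) (K := Lg K n) (L := Lg K n) (renameEquiv K σ).toRingEquiv (tg K n i) := rfl
  rw [this, tg, IsFractionRing.ringEquivOfRingEquiv_algebraMap]
  simp [tg]

lemma main (hn : 1 ≤ n) :
    haveI : Fact (((fgen K n).map (algebraMap (Fg K n) (fgen K n).SplittingField)).Splits) :=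
      ⟨SplittingField.splits _⟩
    Nat.card ((fgen K n).rootSet (fgen K n).SplittingField) = n ∧
    Function.Bijective (Polynomial.Gal.galActionHom (fgen K n) (fgen K n).SplittingField) := by
  haveI : IsSplittingField (Fg K n) (Lg K n) (fgen K n) := lgIsSplittingField K n hn
  set f := fgen K n with hfdef
  haveI : Fact ((f.map (algebraMap (Fg K n) f.SplittingField)).Splits) :=
    ⟨SplittingField.splits f⟩
  -- the algebra equivalence between L and the splitting field
  let e : Lg K n ≃ₐ[Fg K n] f.SplittingField := IsSplittingField.algEquiv (Lg K n) f
  -- the equivalence of root sets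
  have hmem : ∀ x : f.rootSet (Lg K n), e (x : Lg K n) ∈ f.rootSet f.SplittingField :=
    fun x => Polynomial.rootSet_mapsTo (e : Lg K n →ₐ[Fg K n] f.SplittingField) x.2
  have hmem' : ∀ x : f.rootSet f.SplittingField, e.symm (x : f.SplittingField) ∈
      f.rootSet (Lg K n) :=
    fun x => Polynomial.rootSet_mapsTo (e.symm : f.SplittingField →ₐ[Fg K n] Lg K n) x.2
  let ρ : f.rootSet (Lg K n) ≃ f.rootSet f.SplittingField :=
    { toFun := fun x => ⟨e x, hmem x⟩
      invFun := fun x => ⟨e.symm x, hmem' x⟩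
      left_inv := fun x => by simp
      right_inv := fun x => by simp }
  -- the indexing of the roots in L
  have htb : ∀ i : Fin n, tg K n i ∈ f.rootSet (Lg K n) := tg_mem_rootSet K n
  let b : Fin n ≃ f.rootSet (Lg K n) := by
    refine Equiv.ofBijective (fun i => ⟨tg K n i, htb i⟩) ⟨?_, ?_⟩
    · intro i j h
      exact tg_injective K n (congrArg Subtype.val h)
    · rintro ⟨x, hx⟩
      rw [rootSet_fgen_L] at hx
      obtain ⟨i, rfl⟩ := hx
      exact ⟨i, rfl⟩
  constructor
  · -- cardinality
    rw [Nat.card_congr ρ.symm, Nat.card_congr b.symm, Nat.card_eq_fintype_card, Fintype.card_fin]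
  · refine ⟨Polynomial.Gal.galActionHom_injective f f.SplittingField, ?_⟩
    intro π
    set c : Fin n ≃ f.rootSet f.SplittingField := b.trans ρ with hc
    set σ : Equiv.Perm (Fin n) := c.symm.permCongr π with hσ
    refine ⟨Polynomial.Gal.restrict f f.SplittingField
      (e.symm.trans ((sigmaAut K n σ).trans e)), ?_⟩
    apply Equiv.ext
    intro x
    apply Subtype.ext
    rw [Polynomial.Gal.galActionHom_restrict]
    -- compute
    have hx : (x : f.SplittingField) = e (tg K n (c.symm x)) := by
      have : c (c.symm x) = x := c.apply_symm_apply x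
      have h2 : ((c (c.symm x) : f.rootSet f.SplittingField) : f.SplittingField)
          = e (tg K n (c.symm x)) := rfl
      rw [← h2, this]
    calc (e.symm.trans ((sigmaAut K n σ).trans e)) (x : f.SplittingField)
        = e (sigmaAut K n σ (e.symm (x : f.SplittingField))) := rfl
      _ = e (sigmaAut K n σ (tg K n (c.symm x))) := by
          rw [hx]; simp
      _ = e (tg K n (σ (c.symm x))) := by rw [sigmaAut_tg]
      _ = ((π x : f.rootSet f.SplittingField) : f.SplittingField) := by
          have hσx : σ (c.symm x) = c.symm (π x) := by
            rw [hσ]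
            simp [Equiv.permCongr_apply]
          rw [hσx]
          have : c (c.symm (π x)) = π x := c.apply_symm_apply (π x)
          have h2 : ((c (c.symm (π x)) : f.rootSet f.SplittingField) : f.SplittingField)
              = e (tg K n (c.symm (π x))) := rfl
          rw [← h2, this]

end Stmt12Aux

open Stmt12Aux

/-- For any field `K` and `n ≥ 1`, the Galois group of the generic polynomial
`f = xⁿ + v_{n−1}x^{n−1} + ⋯ + v₀` over `K(v₀,…,v_{n−1})`, viewed as a permutation
group on the `n` roots of `f`, is the full symmetric group `Sₙ`. -/
theorem stmt12 (K : Type) [Field K] (n : ℕ) (hn : 1 ≤ n) :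
    ∀ f : (FractionRing (MvPolynomial (Fin n) K))[X],
      f = X ^ n + ∑ i : Fin n,
        C (algebraMap (MvPolynomial (Fin n) K) (FractionRing (MvPolynomial (Fin n) K))
          (MvPolynomial.X i)) * X ^ (i : ℕ) →
      haveI : Fact ((f.map (algebraMap (FractionRing (MvPolynomial (Fin n) K))
          f.SplittingField)).Splits) := ⟨SplittingField.splits f⟩
      Nat.card (f.rootSet f.SplittingField) = n ∧
      Function.Bijective (Polynomial.Gal.galActionHom f f.SplittingField) := by
  intro f hf
  subst hf
  exact Stmt12Aux.main K n hn
end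

section
/- Let F_q be a finite field with q elements and let n ≥ 1. The probability that a uniformly random pair (A, B), with A = Σ_{i=0}^{n−1} a_i x^i and B = x^n + Σ_{i=0}^{n−1} b_i x^i where a_i, b_i are uniform in F_q, satisfies gcd(A, B) ≠ 1, is exactly 1/q. Equivalently, the number of pairs (a_0,…,a_{n−1}, b_0,…,b_{n−1}) ∈ F_q^{2n} with gcd(A, B) ≠ 1 is exactly q^{2n−1}. -/
open Polynomial

namespace Stmt13Aux

variable (F : Type) [Field F]

/-- Pairs (A, B) with deg A < n, B monic of degree n, not coprime. -/
abbrev T (n : ℕ) : Type :=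
  {p : F[X] × F[X] // p.1.degree < (n : ℕ) ∧ p.2.Monic ∧ p.2.degree = (n : ℕ) ∧
    ¬ IsCoprime p.1 p.2}

/-- Monic polynomials of degree n. -/
abbrev M (n : ℕ) : Type := {B : F[X] // B.Monic ∧ B.degree = (n : ℕ)}

variable {F}

lemma degree_sub_X_pow_lt {n : ℕ} {B : F[X]} (h : B.Monic) (hd : B.degree = ((n : ℕ) : WithBot ℕ)) :
    (B - X ^ n).degree < ((n : ℕ) : WithBot ℕ) := by
  have := Polynomial.degree_sub_lt (q := X ^ n) (hd.trans (degree_X_pow n).symm) h.ne_zero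
    (by rw [h.leadingCoeff, leadingCoeff_X_pow])
  rwa [hd] at this

/-- Monic degree-n polys are `X^n` plus a lower-degree poly. -/
noncomputable def monicEquiv (n : ℕ) : M F n ≃ degreeLT F n where
  toFun B := ⟨B.1 - X ^ n, mem_degreeLT.mpr (degree_sub_X_pow_lt B.2.1 B.2.2)⟩
  invFun p := ⟨X ^ n + p.1, monic_X_pow_add (mem_degreeLT.mp p.2),
    by rw [degree_add_eq_left_of_degree_lt (by rw [degree_X_pow]; exact mem_degreeLT.mp p.2),
        degree_X_pow]⟩
  left_inv B := by apply Subtype.ext; simp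
  right_inv p := by apply Subtype.ext; simp

lemma card_M [Fintype F] (n : ℕ) : Nat.card (M F n) = Fintype.card F ^ n := by
  rw [Nat.card_congr ((monicEquiv n).trans (degreeLTEquiv F n).toEquiv)]
  simp [Nat.card_eq_fintype_card]

instance finite_degreeLT [Fintype F] (n : ℕ) : Finite (degreeLT F n) :=
  Finite.of_equiv _ (degreeLTEquiv F n).toEquiv.symm

instance finite_M [Fintype F] (n : ℕ) : Finite (M F n) :=
  Finite.of_equiv _ (monicEquiv n).symm

instance finite_T [Fintype F] (n : ℕ) : Finite (T F n) := by
  apply Finite.of_injective (fun p : T F n =>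
    ((⟨p.1.1, mem_degreeLT.mpr p.2.1⟩ : degreeLT F n), (⟨p.1.2, p.2.2.1, p.2.2.2.1⟩ : M F n)))
  rintro ⟨⟨a, b⟩, _⟩ ⟨⟨a', b'⟩, _⟩ h
  simp only [Prod.mk.injEq, Subtype.mk.injEq] at h
  exact Subtype.ext (Prod.ext h.1 h.2)


noncomputable def g (n : ℕ) (hn : 1 ≤ n) :
    (M F n ⊕ (Σ d : Fin n, Fˣ × M F (n - d) × T F d)) → T F n := fun x =>
  match x with
  | Sum.inl B => ⟨(0, B.1), by simp only [degree_zero]; exact WithBot.bot_lt_coe n, B.2.1, B.2.2, by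
      rw [isCoprime_zero_left, Polynomial.isUnit_iff_degree_eq_zero, B.2.2]
      exact_mod_cast Nat.one_le_iff_ne_zero.mp hn⟩
  | Sum.inr ⟨d, c, Q, p⟩ => by
      refine ⟨(C (c : F) * p.1.2, Q.1 * p.1.2 + p.1.1), ?_, ?_, ?_, ?_⟩
      · rw [degree_mul, degree_C (Units.ne_zero c), zero_add, p.2.2.2.1]
        exact_mod_cast d.isLt
      · refine (Q.2.1.mul p.2.2.1).add_of_left ?_
        rw [degree_mul, Q.2.2, p.2.2.2.1, ← Nat.cast_add, Nat.sub_add_cancel d.isLt.le]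
        exact lt_trans p.2.1 (Nat.cast_lt.mpr d.isLt)
      · rw [degree_add_eq_left_of_degree_lt, degree_mul, Q.2.2, p.2.2.2.1, ← Nat.cast_add,
          Nat.sub_add_cancel d.isLt.le]
        rw [degree_mul, Q.2.2, p.2.2.2.1, ← Nat.cast_add, Nat.sub_add_cancel d.isLt.le]
        exact lt_trans p.2.1 (Nat.cast_lt.mpr d.isLt)
      · rw [isCoprime_mul_unit_left_left (isUnit_C.mpr c.isUnit),
          IsCoprime.mul_add_right_right_iff, isCoprime_comm]
        exact p.2.2.2.2

lemma g_injective (n : ℕ) (hn : 1 ≤ n) : Function.Injective (g (F := F) n hn) := by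
  have hdegCmul : ∀ (c : Fˣ) (d : ℕ) (A₀ : F[X]), A₀.degree = (d : ℕ) →
      (C (c : F) * A₀).degree = (d : ℕ) := fun c d A₀ hA₀ => by
    rw [degree_mul, degree_C (Units.ne_zero c), zero_add, hA₀]
  rintro (⟨B, hB⟩ | ⟨d, c, Q, p⟩) (⟨B', hB'⟩ | ⟨d', c', Q', p'⟩) h <;>
    simp only [g, Subtype.mk.injEq, Prod.mk.injEq] at h
  · exact congrArg Sum.inl (Subtype.ext h.2)
  · exact absurd h.1.symm (mul_ne_zero (C_ne_zero.mpr (Units.ne_zero c')) p'.2.2.1.ne_zero)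
  · exact absurd h.1 (mul_ne_zero (C_ne_zero.mpr (Units.ne_zero c)) p.2.2.1.ne_zero)
  · obtain ⟨h1, h2⟩ := h
    have hd : (d : ℕ) = (d' : ℕ) := by
      have e1 := hdegCmul c d p.1.2 p.2.2.2.1
      have e2 := hdegCmul c' d' p'.1.2 p'.2.2.2.1
      rw [h1, e2] at e1
      exact_mod_cast e1.symm
    obtain rfl : d = d' := Fin.ext hd
    have hc : c = c' := by
      apply Units.ext
      have := congrArg leadingCoeff h1
      rwa [leadingCoeff_mul, leadingCoeff_mul, leadingCoeff_C, leadingCoeff_C,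
        p.2.2.1.leadingCoeff, p'.2.2.1.leadingCoeff, mul_one, mul_one] at this
    subst hc
    have hA₀ : p.1.2 = p'.1.2 := mul_left_cancel₀ (C_ne_zero.mpr (Units.ne_zero c)) h1
    have hmon : (p.1.2).Monic := p.2.2.1
    have hdegR : (p.1.1).degree < (p.1.2).degree := by
      rw [p.2.2.2.1]; exact p.2.1
    have hdegR' : (p'.1.1).degree < (p.1.2).degree := by
      rw [hA₀, p'.2.2.2.1]; exact p'.2.1
    have u1 := div_modByMonic_unique (f := Q.1 * p.1.2 + p.1.1) Q.1 p.1.1 hmon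
      ⟨by ring, hdegR⟩
    have u2 := div_modByMonic_unique (f := Q.1 * p.1.2 + p.1.1) Q'.1 p'.1.1 hmon
      ⟨by rw [h2, hA₀]; ring, hdegR'⟩
    have hQ : Q = Q' := Subtype.ext (u1.1.symm.trans u2.1)
    have hR : p.1.1 = p'.1.1 := u1.2.symm.trans u2.2
    have hp : p = p' := Subtype.ext (Prod.ext hR hA₀)
    rw [hQ, hp]

lemma g_surjective (n : ℕ) (hn : 1 ≤ n) : Function.Surjective (g (F := F) n hn) := by
  rintro ⟨⟨A, B⟩, hA, hBm, hBd, hcop⟩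
  dsimp only at hA hBm hBd hcop
  by_cases hA0 : A = 0
  · exact ⟨Sum.inl ⟨B, hBm, hBd⟩, Subtype.ext (Prod.ext hA0.symm rfl)⟩
  · have hc : A.leadingCoeff ≠ 0 := leadingCoeff_ne_zero.mpr hA0
    set c : Fˣ := Units.mk0 A.leadingCoeff hc with hcdef
    have hdA : A.degree = (A.natDegree : ℕ) := degree_eq_natDegree hA0
    have hdlt : A.natDegree < n := by
      rw [hdA] at hA; exact_mod_cast hA
    set d : Fin n := ⟨A.natDegree, hdlt⟩ with hddef
    set A₀ : F[X] := A * C (A.leadingCoeff)⁻¹ with hA₀def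
    have hA₀m : A₀.Monic := monic_mul_leadingCoeff_inv hA0
    have hA₀d : A₀.degree = ((d : ℕ) : WithBot ℕ) := by
      rw [hA₀def, degree_mul, degree_C (inv_ne_zero hc), add_zero, hdA]
    have hCcA₀ : C (c : F) * A₀ = A := by
      rw [hcdef, Units.val_mk0, hA₀def, mul_comm A, ← mul_assoc, ← C_mul,
        mul_inv_cancel₀ hc, C_1, one_mul]
    set Q : F[X] := B /ₘ A₀ with hQdef
    set R : F[X] := B %ₘ A₀ with hRdef
    have hBn : B.natDegree = n := natDegree_eq_of_degree_eq_some hBd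
    have hdecomp : R + A₀ * Q = B := modByMonic_add_div B A₀
    have hRdeg : R.degree < ((d : ℕ) : WithBot ℕ) := hA₀d ▸ degree_modByMonic_lt B hA₀m
    have hQm : Q.Monic := by
      have := leadingCoeff_divByMonic_of_monic (p := B) (q := A₀) hA₀m (by
        rw [hA₀d, hBd]; exact_mod_cast d.isLt.le)
      rwa [hBm.leadingCoeff] at this
    have hQd : Q.degree = ((n - (d : ℕ) : ℕ) : WithBot ℕ) := by
      have hQ0 : Q ≠ 0 := hQm.ne_zero
      rw [degree_eq_natDegree hQ0, hQdef, natDegree_divByMonic B hA₀m, hBn]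
      congr 1
      rw [natDegree_eq_of_degree_eq_some hA₀d]
    have hcop' : ¬ IsCoprime R A₀ := by
      intro hco
      apply hcop
      rw [← hCcA₀, isCoprime_mul_unit_left_left (isUnit_C.mpr c.isUnit),
        ← hdecomp]
      exact hco.symm.add_mul_left_right Q
    refine ⟨Sum.inr ⟨d, c, ⟨Q, hQm, hQd⟩, ⟨(R, A₀), hRdeg, hA₀m, hA₀d, hcop'⟩⟩, ?_⟩
    apply Subtype.ext
    show (C (c : F) * A₀, Q * A₀ + R) = (A, B)
    exact Prod.ext hCcA₀ (by rw [← hdecomp]; ring)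



lemma card_T_zero : Nat.card (T F 0) = 0 := by
  have : IsEmpty (T F 0) := by
    constructor
    rintro ⟨⟨A, B⟩, hA, hBm, hBd, hcop⟩
    dsimp only at hBd hcop
    have hB1 : B = 1 := hBm.natDegree_eq_zero.mp
      (natDegree_eq_of_degree_eq_some (by exact_mod_cast hBd))
    exact hcop (hB1 ▸ isCoprime_one_right)
  simp

lemma nat_card_sigma {ι : Type} [Fintype ι] [DecidableEq ι] (f : ι → Type) [∀ i, Finite (f i)] :
    Nat.card (Σ i, f i) = ∑ i, Nat.card (f i) := by
  letI : ∀ i, Fintype (f i) := fun i => Fintype.ofFinite _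
  simp [Nat.card_eq_fintype_card, Fintype.card_sigma]

lemma geom (r : ℕ) : ∀ m : ℕ, r * ∑ j ∈ Finset.range m, (1 + r) ^ j + 1 = (1 + r) ^ m := by
  intro m
  induction m with
  | zero => simp
  | succ k ih => rw [Finset.sum_range_succ, mul_add, add_right_comm, ih, pow_succ]; ring

lemma arith (q m : ℕ) (hq : 1 ≤ q) :
    q ^ (m + 1) + ∑ d ∈ Finset.range m, (q - 1) * q ^ (m + d + 1) = q ^ (2 * m + 1) := by
  obtain ⟨r, rfl⟩ := Nat.exists_eq_add_of_le hq
  have h1 : 1 + r - 1 = r := by omega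
  rw [h1]
  have hstep : ∑ d ∈ Finset.range m, r * (1+r) ^ (m + d + 1)
      = (1+r) ^ (m+1) * (r * ∑ d ∈ Finset.range m, (1+r) ^ d) := by
    rw [Finset.mul_sum, Finset.mul_sum]
    apply Finset.sum_congr rfl
    intro d _
    ring
  rw [hstep, show (1+r) ^ (m+1) + (1+r) ^ (m+1) * (r * ∑ d ∈ Finset.range m, (1+r) ^ d)
      = (1+r) ^ (m+1) * (r * ∑ d ∈ Finset.range m, (1+r) ^ d + 1) from by ring,
    geom, ← pow_add]
  congr 1
  omega



variable [Fintype F]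

lemma card_T : ∀ n : ℕ, 1 ≤ n → Nat.card (T F n) = Fintype.card F ^ (2 * n - 1) := by
  intro n
  induction n using Nat.strong_induction_on with
  | _ n ih =>
    intro hn
    obtain ⟨m, rfl⟩ : ∃ m, n = m + 1 := ⟨n - 1, by omega⟩
    have hq1 : 1 ≤ Fintype.card F := Fintype.card_pos
    have e := Equiv.ofBijective _ ⟨g_injective (F := F) (m+1) hn, g_surjective (m+1) hn⟩
    rw [← Nat.card_congr e, Nat.card_sum, nat_card_sigma, card_M]
    have hterm : ∀ d : Fin (m+1), Nat.card (Fˣ × M F (m + 1 - (d:ℕ)) × T F (d:ℕ))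
        = (Fintype.card F - 1) * (Fintype.card F ^ (m + 1 - (d:ℕ)) * Nat.card (T F (d:ℕ))) := by
      intro d
      rw [Nat.card_prod, Nat.card_prod, Nat.card_units, Nat.card_eq_fintype_card, card_M]
    rw [Finset.sum_congr rfl (fun d _ => hterm d)]
    rw [Fin.sum_univ_eq_sum_range
      (fun d => (Fintype.card F - 1) * (Fintype.card F ^ (m+1-d) * Nat.card (T F d))) (m+1)]
    rw [Finset.sum_range_succ', card_T_zero]
    simp only [mul_zero, add_zero]
    have hcong : ∀ i ∈ Finset.range m,
        (Fintype.card F - 1) * (Fintype.card F ^ (m+1-(i+1)) * Nat.card (T F (i+1)))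
        = (Fintype.card F - 1) * Fintype.card F ^ (m + i + 1) := by
      intro i hi
      have hi' : i < m := Finset.mem_range.mp hi
      have he : m + 1 - (i+1) + (2*(i+1) - 1) = m + i + 1 := by omega
      rw [ih (i+1) (by omega) (by omega), ← pow_add, he]
    rw [Finset.sum_congr rfl hcong, show 2 * (m+1) - 1 = 2*m+1 from by omega]
    exact arith (Fintype.card F) m hq1


omit [Fintype F] in
lemma sum_mem_degreeLT (n : ℕ) (a : Fin n → F) :
    (∑ i : Fin n, C (a i) * X ^ (i : ℕ)).degree < ((n : ℕ) : WithBot ℕ) := by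
  have hmem : (∑ i : Fin n, C (a i) * X ^ (i : ℕ)) ∈ degreeLT F n :=
    Submodule.sum_mem _ (fun i _ => mem_degreeLT.mpr
      (lt_of_le_of_lt (degree_C_mul_X_pow_le _ _) (Nat.cast_lt.mpr i.isLt)))
  exact mem_degreeLT.mp hmem

omit [Fintype F] in
lemma coeff_sum_eq (n : ℕ) (a : Fin n → F) (j : Fin n) :
    (∑ i : Fin n, C (a i) * X ^ (i : ℕ)).coeff (j : ℕ) = a j := by
  rw [finset_sum_coeff, Finset.sum_eq_single j]
  · simp
  · intro b _ hbj
    rw [coeff_C_mul, coeff_X_pow, if_neg (fun h => hbj (Fin.ext h.symm)), mul_zero]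
  · intro h
    exact absurd (Finset.mem_univ j) h

omit [Fintype F] in
lemma sum_coeff_eq_self {n : ℕ} {p : F[X]} (hp : p.degree < ((n : ℕ) : WithBot ℕ)) :
    ∑ i : Fin n, C (p.coeff (i : ℕ)) * X ^ (i : ℕ) = p := by
  rw [sum_fin (fun i c => C c * X ^ i) (by simp) hp, sum_C_mul_X_pow_eq]

/-- The statement's subtype. -/
abbrev Sty (F : Type) [Field F] (n : ℕ) : Type :=
  {ab : (Fin n → F) × (Fin n → F) //
      ¬ IsCoprime (∑ i, C (ab.1 i) * X ^ (i : ℕ) : F[X])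
          (X ^ n + ∑ i, C (ab.2 i) * X ^ (i : ℕ) : F[X])}

/-- The bridge equivalence. -/
noncomputable def bridge (n : ℕ) : Sty F n ≃ T F n := by
  apply Equiv.ofBijective (fun ab : Sty F n =>
    (⟨(∑ i, C (ab.1.1 i) * X ^ (i : ℕ), X ^ n + ∑ i, C (ab.1.2 i) * X ^ (i : ℕ)),
      sum_mem_degreeLT n ab.1.1, monic_X_pow_add (sum_mem_degreeLT n ab.1.2),
      by rw [degree_add_eq_left_of_degree_lt
          (by rw [degree_X_pow]; exact sum_mem_degreeLT n ab.1.2), degree_X_pow],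
      ab.2⟩ : T F n))
  constructor
  · rintro ⟨⟨a, b⟩, hab⟩ ⟨⟨a', b'⟩, hab'⟩ h
    simp only [Subtype.mk.injEq, Prod.mk.injEq] at h
    obtain ⟨h1, h2⟩ := h
    have h2' := add_left_cancel h2
    apply Subtype.ext
    apply Prod.ext <;> dsimp only <;> funext j
    · rw [← coeff_sum_eq n a j, ← coeff_sum_eq n a' j, h1]
    · rw [← coeff_sum_eq n b j, ← coeff_sum_eq n b' j, h2']
  · rintro ⟨⟨A, B⟩, hA, hBm, hBd, hcop⟩
    dsimp only at hA hBm hBd hcop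
    have hBX : (B - X ^ n).degree < ((n : ℕ) : WithBot ℕ) := degree_sub_X_pow_lt hBm hBd
    have hAs : ∑ i : Fin n, C (A.coeff (i : ℕ)) * X ^ (i : ℕ) = A := sum_coeff_eq_self hA
    have hBs : X ^ n + ∑ i : Fin n, C ((B - X ^ n).coeff (i : ℕ)) * X ^ (i : ℕ) = B := by
      rw [sum_coeff_eq_self hBX]; ring
    refine ⟨⟨(fun i => A.coeff (i : ℕ), fun i => (B - X ^ n).coeff (i : ℕ)), ?_⟩, ?_⟩
    · rw [hAs, hBs]; exact hcop
    · apply Subtype.ext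
      exact Prod.ext hAs hBs

end Stmt13Aux

open Stmt13Aux in
/-- For a finite field `F_q` and `n ≥ 1`, the number of pairs
`(a₀,…,a_{n−1}, b₀,…,b_{n−1}) ∈ F_q^{2n}` such that
`gcd(Σ aᵢ xⁱ, xⁿ + Σ bᵢ xⁱ) ≠ 1` is exactly `q^{2n−1}`. -/
theorem stmt13 (F : Type) [Field F] [Fintype F] (n : ℕ) (hn : 1 ≤ n) :
    Nat.card {ab : (Fin n → F) × (Fin n → F) //
      ¬ IsCoprime (∑ i, C (ab.1 i) * X ^ (i : ℕ) : F[X])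
          (X ^ n + ∑ i, C (ab.2 i) * X ^ (i : ℕ) : F[X])} =
      Fintype.card F ^ (2 * n - 1) := by
  rw [Nat.card_congr (bridge (F := F) n)]
  exact card_T n hn
end
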